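/- Let p : ℝ² → ℝ⁴ have polynomial components of total degree at most n whose four components sum to 1 identically (p is barycentric-valued), and let D = (d_{j,k}) satisfy B_j^m(p(s,t)) = Σ_{|k|=mn} d_{j,k} B_k^{mn}(s,t) for all (s,t) ∈ ℝ² and all |j| = m. Then every column of D sums to 1: for each multi-index k with |k| = mn, Σ_{|j|=m} d_{j,k} = 1. -/

import Mathlib

open MeasureTheory Finset

/-- The multinomial coefficient `n! / ∏ l, (i l)!` as a real number. -/
noncomputable def mcoef {L : ℕ} (n : ℕ) (i : Fin L → ℕ) : ℝ :=
  (n.factorial : ℝ) / ∏ l, ((i l).factorial : ℝ)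

/-- The Bernstein basis polynomial of degree `n` for the multi-index `i`,
as a function of barycentric coordinates `β : Fin L → ℝ`. -/
noncomputable def bern {L : ℕ} (n : ℕ) (i : Fin L → ℕ) (β : Fin L → ℝ) : ℝ :=
  mcoef n i * ∏ l, β l ^ i l

/-- The triangular Bernstein basis polynomial of degree `n` for a multi-index
`i : Fin 3 → ℕ`, as a function on `ℝ²`. -/
noncomputable def triBern (n : ℕ) (i : Fin 3 → ℕ) (x : ℝ × ℝ) : ℝ :=
  mcoef n i * (x.1 ^ i 0 * x.2 ^ i 1 * (1 - x.1 - x.2) ^ i 2)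

/-- The tetrahedral Bernstein basis polynomial of degree `m` for a multi-index
`j : Fin 4 → ℕ`, as a function on `ℝ⁴`. -/
noncomputable def tetBern (m : ℕ) (j : Fin 4 → ℕ) (u : Fin 4 → ℝ) : ℝ :=
  mcoef m j * ∏ l, u l ^ j l

/-- The standard triangle `Ω = {(s,t) : 0 ≤ s, 0 ≤ t, s + t ≤ 1}` in `ℝ²`. -/
def Omega : Set (ℝ × ℝ) := {x | 0 ≤ x.1 ∧ 0 ≤ x.2 ∧ x.1 + x.2 ≤ 1}

/-- `p : ℝ² → ℝ⁴` has components that are real polynomials in `(s,t)` of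
total degree at most `n`. -/
def PolyComponents (n : ℕ) (p : ℝ × ℝ → Fin 4 → ℝ) : Prop :=
  ∀ l : Fin 4, ∃ P : MvPolynomial (Fin 2) ℝ, P.totalDegree ≤ n ∧
    ∀ x : ℝ × ℝ, p x l = MvPolynomial.eval ![x.1, x.2] P



lemma mcoef_eq_multinomial {L N : ℕ} (k : Fin L → ℕ) (h : ∑ l, k l = N) :
    mcoef N k = (Nat.multinomial Finset.univ k : ℝ) := by
  have spec := Nat.multinomial_spec (Finset.univ : Finset (Fin L)) k
  rw [h] at spec
  have hprod : (0:ℝ) < ∏ l, ((k l).factorial : ℝ) :=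
    Finset.prod_pos fun l _ => by positivity
  rw [mcoef, div_eq_iff (ne_of_gt hprod), ← spec]
  push_cast; ring

lemma mcoef_pos {L N : ℕ} (k : Fin L → ℕ) : 0 < mcoef N k := by
  have hprod : (0:ℝ) < ∏ l, ((k l).factorial : ℝ) :=
    Finset.prod_pos fun l _ => by positivity
  exact div_pos (by positivity) hprod

lemma bern_sum {L N : ℕ} (u : Fin L → ℝ) :
    ∑ k ∈ Finset.piAntidiag (univ : Finset (Fin L)) N, bern N k u = (∑ l, u l) ^ N := by
  rw [Finset.sum_pow_eq_sum_piAntidiag]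
  refine Finset.sum_congr rfl fun k hk => ?_
  rw [Finset.mem_piAntidiag] at hk
  rw [bern, mcoef_eq_multinomial k hk.1]

lemma triBern_eq_bern (N : ℕ) (k : Fin 3 → ℕ) (x : ℝ × ℝ) :
    triBern N k x = bern N k ![x.1, x.2, 1 - x.1 - x.2] := by
  simp [triBern, bern, Fin.prod_univ_three]

/-- Main linear-independence lemma. -/
lemma bern_indep (N : ℕ) (e : (Fin 3 → ℕ) → ℝ)
    (h : ∀ x : ℝ × ℝ, ∑ k ∈ Finset.Nat.antidiagonalTuple 3 N, e k * triBern N k x = 0) :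
    ∀ k ∈ Finset.Nat.antidiagonalTuple 3 N, e k = 0 := by
  have hA : (Finset.Nat.antidiagonalTuple 3 N : Finset (Fin 3 → ℕ))
      = Finset.piAntidiag (univ : Finset (Fin 3)) N :=
    (Finset.piAntidiag_univ_fin_eq_antidiagonalTuple N 3).symm
  -- the 3-variable function
  set g : (Fin 3 → ℝ) → ℝ := fun u => ∑ k ∈ Finset.Nat.antidiagonalTuple 3 N, e k * bern N k u
    with hg
  have hcont : Continuous g := by
    apply continuous_finset_sum
    intro k _
    unfold bern
    fun_prop
  -- on the hyperplane sum = 1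
  have h1 : ∀ u : Fin 3 → ℝ, (∑ l, u l) = 1 → g u = 0 := by
    intro u hu
    have hx := h (u 0, u 1)
    have hu2 : u 2 = 1 - u 0 - u 1 := by
      rw [Fin.sum_univ_three] at hu; linarith
    rw [hg]
    rw [← hx]
    refine Finset.sum_congr rfl fun k _ => ?_
    rw [triBern_eq_bern]
    congr 1
    congr 1
    funext l
    fin_cases l <;> simp [hu2]
  -- homogeneity
  have hhom : ∀ (c : ℝ) (u : Fin 3 → ℝ), g (fun l => c * u l) = c ^ N * g u := by
    intro c u
    rw [hg, Finset.mul_sum]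
    refine Finset.sum_congr rfl fun k hk => ?_
    have hks : ∑ l, k l = N := (Finset.Nat.mem_antidiagonalTuple.mp hk)
    simp only [bern, mul_pow, Finset.prod_mul_distrib, Finset.prod_pow_eq_pow_sum]
    rw [hks]
    ring
  -- vanishing when sum ≠ 0
  have h2 : ∀ u : Fin 3 → ℝ, (∑ l, u l) ≠ 0 → g u = 0 := by
    intro u hu
    have : g u = g (fun l => (∑ l', u l') * ((∑ l', u l')⁻¹ * u l)) := by
      congr 1; funext l; field_simp
    rw [this, hhom, h1, mul_zero]
    rw [← Finset.mul_sum]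
    field_simp
  -- vanishing everywhere by continuity
  have h3 : ∀ u : Fin 3 → ℝ, g u = 0 := by
    intro u
    by_cases hu : (∑ l, u l) = 0
    · -- perturb
      have key : ∀ ε : ℝ, ε ≠ 0 → g (Function.update u 0 (u 0 + ε)) = 0 := by
        intro ε hε
        apply h2
        rw [Fin.sum_univ_three] at hu ⊢
        rw [Function.update_self, Function.update_of_ne (by decide),
          Function.update_of_ne (by decide)]
        intro habs
        exact hε (by linarith)
      have hc : Continuous fun ε : ℝ => g (Function.update u 0 (u 0 + ε)) := by
        apply hcont.comp
        fun_prop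
      have := Continuous.ext_on (dense_compl_singleton (0:ℝ)) hc
        (continuous_const (y := (0:ℝ))) ?_
      · have h0 := congrFun this 0
        simpa using h0
      · intro ε hε
        simp only [Set.mem_compl_iff, Set.mem_singleton_iff] at hε
        simpa using key ε hε
    · exact h2 u hu
  -- now extract coefficients via MvPolynomial
  set P : MvPolynomial (Fin 3) ℝ :=
    ∑ k ∈ Finset.Nat.antidiagonalTuple 3 N,
      MvPolynomial.monomial (Finsupp.equivFunOnFinite.symm k) (e k * mcoef N k) with hP
  have hevalP : ∀ u : Fin 3 → ℝ, MvPolynomial.eval u P = g u := by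
    intro u
    rw [hP, map_sum]
    refine Finset.sum_congr rfl fun k _ => ?_
    rw [MvPolynomial.eval_monomial, bern]
    rw [Finsupp.prod_fintype _ _ (fun l => pow_zero _)]
    simp [mul_assoc]
  have hP0 : P = 0 := by
    apply MvPolynomial.funext
    intro u
    rw [hevalP, h3, map_zero]
  intro k hk
  have hcoeff := congrArg (MvPolynomial.coeff (Finsupp.equivFunOnFinite.symm k)) hP0
  rw [hP] at hcoeff
  rw [MvPolynomial.coeff_zero] at hcoeff
  rw [MvPolynomial.coeff_sum] at hcoeff
  rw [Finset.sum_eq_single k] at hcoeff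
  · rw [MvPolynomial.coeff_monomial, if_pos rfl] at hcoeff
    have := mcoef_pos (N := N) k
    rcases mul_eq_zero.mp hcoeff with h | h
    · exact h
    · exact absurd h (ne_of_gt this)
  · intro b _ hbk
    rw [MvPolynomial.coeff_monomial, if_neg]
    intro habs
    exact hbk (Finsupp.equivFunOnFinite.symm.injective habs)
  · intro habs; exact absurd hk habs

lemma tet_sum (m : ℕ) (u : Fin 4 → ℝ) (hu : ∑ l, u l = 1) :
    ∑ j ∈ Finset.Nat.antidiagonalTuple 4 m, tetBern m j u = 1 := by
  have hA : (Finset.Nat.antidiagonalTuple 4 m : Finset (Fin 4 → ℕ))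
      = Finset.piAntidiag (univ : Finset (Fin 4)) m :=
    (Finset.piAntidiag_univ_fin_eq_antidiagonalTuple m 4).symm
  have : ∀ j, tetBern m j u = bern m j u := fun j => rfl
  simp_rw [this, hA, bern_sum, hu, one_pow]

lemma tri_sum (N : ℕ) (x : ℝ × ℝ) :
    ∑ k ∈ Finset.Nat.antidiagonalTuple 3 N, triBern N k x = 1 := by
  have hA : (Finset.Nat.antidiagonalTuple 3 N : Finset (Fin 3 → ℕ))
      = Finset.piAntidiag (univ : Finset (Fin 3)) N :=
    (Finset.piAntidiag_univ_fin_eq_antidiagonalTuple N 3).symm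
  simp_rw [triBern_eq_bern, hA, bern_sum]
  rw [Fin.sum_univ_three]
  norm_num
  show (x.1 + x.2 + (1 - x.1 - x.2)) ^ N = 1
  rw [show x.1 + x.2 + (1 - x.1 - x.2) = 1 by ring, one_pow]


/-- if `p` is barycentric-valued then every column of `D` sums
to `1`. -/
theorem D_column_sums_one (n m : ℕ) (p : ℝ × ℝ → Fin 4 → ℝ)
    (hp : PolyComponents n p) (hbar : ∀ x : ℝ × ℝ, ∑ l, p x l = 1)
    (d : (Fin 4 → ℕ) → (Fin 3 → ℕ) → ℝ)
    (hD : ∀ j ∈ Finset.Nat.antidiagonalTuple 4 m, ∀ x : ℝ × ℝ,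
      tetBern m j (p x) =
        ∑ k ∈ Finset.Nat.antidiagonalTuple 3 (m * n), d j k * triBern (m * n) k x) :
    ∀ k ∈ Finset.Nat.antidiagonalTuple 3 (m * n),
      ∑ j ∈ Finset.Nat.antidiagonalTuple 4 m, d j k = 1 := by
  have key : ∀ k ∈ Finset.Nat.antidiagonalTuple 3 (m * n),
      ((∑ j ∈ Finset.Nat.antidiagonalTuple 4 m, d j k) - 1) = 0 := by
    apply bern_indep
    intro x
    have e1 : ∑ j ∈ Finset.Nat.antidiagonalTuple 4 m, tetBern m j (p x) = 1 :=
      tet_sum m (p x) (hbar x)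
    calc ∑ k ∈ Finset.Nat.antidiagonalTuple 3 (m * n),
          ((∑ j ∈ Finset.Nat.antidiagonalTuple 4 m, d j k) - 1) * triBern (m * n) k x
        = (∑ k ∈ Finset.Nat.antidiagonalTuple 3 (m * n),
            ∑ j ∈ Finset.Nat.antidiagonalTuple 4 m, d j k * triBern (m * n) k x)
          - ∑ k ∈ Finset.Nat.antidiagonalTuple 3 (m * n), triBern (m * n) k x := by
          rw [← Finset.sum_sub_distrib]
          refine Finset.sum_congr rfl fun k _ => ?_
          rw [← Finset.sum_mul]; ring
      _ = (∑ j ∈ Finset.Nat.antidiagonalTuple 4 m, tetBern m j (p x)) - 1 := by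
          rw [Finset.sum_comm, tri_sum]
          congr 1
          exact Finset.sum_congr rfl fun j hj => (hD j hj x).symm
      _ = 0 := by rw [e1, sub_self]
  intro k hk
  have := key k hk
  linarith
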